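/- Let X be a normed vector space over ℂ, let D be a subspace of X and A : D → X a linear map. Let Γ be a family of seminorms on X such that p(λx − Ax) ≥ λ·p(x) for every λ > 0, every p ∈ Γ and every x ∈ D, and suppose that for some λ > 0 the map x ↦ λx − Ax is injective with inverse R(λ) defined on its range. Then for every p ∈ Γ, every n ∈ ℕ and every y in the domain of R(λ)ⁿ, p(λⁿ·R(λ)ⁿ y) ≤ p(y); in particular, if λ − A is bijective onto X then the family {λⁿ R(λ,A)ⁿ : n ∈ ℕ, λ > 0} satisfies the uniform seminorm bound p(λⁿ R(λ,A)ⁿ y) ≤ p(y) for all y ∈ X. -/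

import Mathlib

/-- If `A : D → X` is bi-dissipative with respect to a family `Γ` of
seminorms, then the powers of the resolvent satisfy `p(λⁿ R(λ)ⁿ y) ≤ p(y)` on the
domain of `R(λ)ⁿ` (expressed via a chain `w 0, …, w n` with
`w (i+1) = (λ − A)(w i)`, so that `w 0 = R(λ)ⁿ (w n)`); in particular, if
`λ − A` is bijective onto `X` for every `λ > 0`, then the family
`{λⁿ R(λ,A)ⁿ : n ∈ ℕ, λ > 0}` satisfies the uniform seminorm bound
`p(λⁿ R(λ,A)ⁿ y) ≤ p(y)` for all `y ∈ X`. -/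
theorem bi_dissipative_resolvent_powers_seminorm_bound
    {X : Type*} [NormedAddCommGroup X] [NormedSpace ℂ X]
    (D : Subspace ℂ X) (A : D →ₗ[ℂ] X)
    (Γ : Set (Seminorm ℂ X))
    (hdiss : ∀ lam : ℝ, 0 < lam → ∀ p ∈ Γ, ∀ x : D,
      lam * p (x : X) ≤ p ((lam : ℂ) • (x : X) - A x)) :
    (∀ lam : ℝ, 0 < lam → ∀ p ∈ Γ, ∀ (n : ℕ) (w : ℕ → X),
      (∀ i < n, ∃ d : D, (d : X) = w i ∧ (lam : ℂ) • (d : X) - A d = w (i + 1)) →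
      p ((lam : ℂ) ^ n • w 0) ≤ p (w n)) ∧
    ((∀ lam : ℝ, 0 < lam →
        Function.Bijective (fun x : D => (lam : ℂ) • (x : X) - A x)) →
      ∀ lam : ℝ, 0 < lam → ∀ p ∈ Γ, ∀ (n : ℕ) (y : X),
        p ((lam : ℂ) ^ n •
            (fun z : X =>
              ((Function.invFun (fun x : D => (lam : ℂ) • (x : X) - A x) z : D) : X))^[n]
              y) ≤ p y) := by
  have key : ∀ lam : ℝ, 0 < lam → ∀ p ∈ Γ, ∀ (n : ℕ) (w : ℕ → X),
      (∀ i < n, ∃ d : D, (d : X) = w i ∧ (lam : ℂ) • (d : X) - A d = w (i + 1)) →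
      p ((lam : ℂ) ^ n • w 0) ≤ p (w n) := by
    intro lam hlam p hp n
    induction n with
    | zero => intro w _; simp
    | succ n ih =>
      intro w hw
      have h1 : p ((lam : ℂ) ^ n • w 0) ≤ p (w n) :=
        ih w (fun i hi => hw i (Nat.lt_succ_of_lt hi))
      obtain ⟨d, hd, hfd⟩ := hw n (Nat.lt_succ_self n)
      have h2 : lam * p (w n) ≤ p (w (n + 1)) := by
        rw [← hd, ← hfd]; exact hdiss lam hlam p hp d
      have hsm : ∀ (m : ℕ) (x : X), p ((lam : ℂ) ^ m • x) = lam ^ m * p x := by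
        intro m x
        rw [map_smul_eq_mul]
        norm_num [abs_of_pos hlam]
      calc p ((lam : ℂ) ^ (n + 1) • w 0) = lam ^ (n+1) * p (w 0) := hsm _ _
        _ = lam * (lam ^ n * p (w 0)) := by ring
        _ = lam * p ((lam : ℂ) ^ n • w 0) := by rw [hsm]
        _ ≤ lam * p (w n) := by
            exact mul_le_mul_of_nonneg_left h1 hlam.le
        _ ≤ p (w (n + 1)) := h2
  refine ⟨key, ?_⟩
  intro hbij lam hlam p hp n y
  set f : D → X := fun x : D => (lam : ℂ) • (x : X) - A x with hf
  set g : X → X := fun z : X => ((Function.invFun f z : D) : X) with hg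
  have hfg : ∀ z : X, f (Function.invFun f z) = z :=
    Function.rightInverse_invFun (hbij lam hlam).2
  set w : ℕ → X := fun i => g^[n - i] y with hwdef
  have hchain : ∀ i < n, ∃ d : D, (d : X) = w i ∧
      (lam : ℂ) • (d : X) - A d = w (i + 1) := by
    intro i hi
    refine ⟨Function.invFun f (w (i + 1)), ?_, hfg _⟩
    have : n - i = (n - (i + 1)) + 1 := by omega
    simp only [hwdef, this, Function.iterate_succ_apply']
    rfl
  have := key lam hlam p hp n w hchain
  simpa [hwdef] using this
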